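/- Let A be a randomized algorithm with domain 𝒳^n and finite range 𝒴, and let B be any (possibly randomized) algorithm with domain 𝒴 and finite range 𝒴'. Then for every random variable S over 𝒳^n and every β ≥ 0, I_∞^β(S; B(A(S))) ≤ I_∞^β(S; A(S)); that is, approximate max-information is preserved under post-processing. -/

import Mathlib

open scoped ENNReal

/-- Probability of an event under a PMF. -/
noncomputable def pr {Z : Type*} (p : PMF Z) (O : Set Z) : ℝ≥0∞ :=
  p.toOuterMeasure O

/-- Product of two independent PMFs. -/
noncomputable def pmfPair {A B : Type*} (p : PMF A) (q : PMF B) : PMF (A × B) :=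
  p.bind fun a => q.map fun b => (a, b)

/-- Joint distribution of (input, output). -/
noncomputable def joint {A B : Type*} (μ : PMF A) (f : A → PMF B) : PMF (A × B) :=
  μ.bind fun a => (f a).map fun b => (a, b)

/-- Product of the marginals of input and output. -/
noncomputable def indepProd {A B : Type*} (μ : PMF A) (f : A → PMF B) : PMF (A × B) :=
  pmfPair μ (μ.bind f)

/-- `D_∞^δ(p ‖ q) ≤ k` (δ-approximate max-divergence, log base 2). -/
def approxDivLe {Z : Type*} (p q : PMF Z) (δ k : ℝ) : Prop :=
  ∀ O : Set Z, ENNReal.ofReal δ < pr p O →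
    pr p O - ENNReal.ofReal δ ≤ (2 : ℝ≥0∞) ^ k * pr q O

/-- `I_∞^β(S; f(S)) ≤ k` for `S ∼ μ`. -/
def approxMaxInfoLe {A B : Type*} (μ : PMF A) (f : A → PMF B) (β k : ℝ) : Prop :=
  approxDivLe (joint μ f) (indepProd μ f) β k

open MeasureTheory Set

/-- Layer-cake representation of the probability of `O` under `r.bind T`. -/
lemma pr_bind_eq_lintegral {Z W : Type*} [Countable Z] (r : PMF Z) (T : Z → PMF W)
    (O : Set W) :
    pr (r.bind T) O
      = ∫⁻ t in Set.Ioc (0:ℝ) 1, pr r {z | ENNReal.ofReal t < pr (T z) O} := by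
  classical
  set g : Z → ℝ≥0∞ := fun z => pr (T z) O with hg
  have hg1 : ∀ z, g z ≤ 1 := by
    intro z
    rw [hg]
    simp only [pr, PMF.toOuterMeasure_apply]
    calc ∑' x, O.indicator (T z) x ≤ ∑' x, T z x :=
          ENNReal.tsum_le_tsum fun x => Set.indicator_le_self _ _ x
      _ = 1 := (T z).tsum_coe
  have hgt : ∀ z, g z ≠ ⊤ := fun z => ne_top_of_le_ne_top ENNReal.one_ne_top (hg1 z)
  have hmeas : ∀ z, MeasurableSet {t : ℝ | ENNReal.ofReal t < g z} :=
    fun z => measurableSet_lt (ENNReal.measurable_ofReal) measurable_const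
  have key : ∀ z : Z, r z * g z
      = ∫⁻ t in Set.Ioc (0:ℝ) 1,
          ({t : ℝ | ENNReal.ofReal t < g z}).indicator (fun _ => r z) t := by
    intro z
    rw [lintegral_indicator_const (hmeas z), Measure.restrict_apply (hmeas z)]
    have hset : {t : ℝ | ENNReal.ofReal t < g z} ∩ Set.Ioc (0:ℝ) 1
        = Set.Ioo (0:ℝ) ((g z).toReal) := by
      ext t
      simp only [Set.mem_inter_iff, Set.mem_setOf_eq, Set.mem_Ioc, Set.mem_Ioo]
      constructor
      · rintro ⟨hlt, ht0, _⟩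
        exact ⟨ht0, (ENNReal.ofReal_lt_iff_lt_toReal ht0.le (hgt z)).mp hlt⟩
      · rintro ⟨ht0, hlt⟩
        refine ⟨(ENNReal.ofReal_lt_iff_lt_toReal ht0.le (hgt z)).mpr hlt, ht0, ?_⟩
        exact hlt.le.trans (ENNReal.toReal_le_of_le_ofReal one_pos.le (by simpa using hg1 z))
    rw [hset]
    have : (volume : Measure ℝ) (Set.Ioo (0:ℝ) ((g z).toReal))
        = ENNReal.ofReal ((g z).toReal) := by simp
    rw [this, ENNReal.ofReal_toReal (hgt z)]
  calc pr (r.bind T) O = ∑' z, r z * g z := PMF.toOuterMeasure_bind_apply r T O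
    _ = ∑' z, ∫⁻ t in Set.Ioc (0:ℝ) 1,
          ({t : ℝ | ENNReal.ofReal t < g z}).indicator (fun _ => r z) t :=
        tsum_congr key
    _ = ∫⁻ t in Set.Ioc (0:ℝ) 1, ∑' z,
          ({t : ℝ | ENNReal.ofReal t < g z}).indicator (fun _ => r z) t := by
        rw [← lintegral_tsum fun z =>
          ((measurable_const.indicator (hmeas z))).aemeasurable]
    _ = ∫⁻ t in Set.Ioc (0:ℝ) 1, pr r {z | ENNReal.ofReal t < g z} := by
        refine setLIntegral_congr_fun measurableSet_Ioc ?_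
        intro t _
        beta_reduce
        rw [pr, PMF.toOuterMeasure_apply]
        refine tsum_congr fun z => ?_
        by_cases h : ENNReal.ofReal t < g z <;>
          simp [Set.indicator_apply, h]

/-- Data-processing inequality for approximate max-divergence. -/
lemma approxDivLe_bind {Z W : Type*} [Countable Z] (p q : PMF Z) (T : Z → PMF W)
    (δ k : ℝ) (h : approxDivLe p q δ k) :
    approxDivLe (p.bind T) (q.bind T) δ k := by
  intro O _
  set δ' := ENNReal.ofReal δ with hδ'
  set S : ℝ → Set Z := fun t => {z | ENNReal.ofReal t < pr (T z) O} with hS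
  have hp := pr_bind_eq_lintegral p T O
  have hq := pr_bind_eq_lintegral q T O
  have hδconst : δ' = ∫⁻ _ in Set.Ioc (0:ℝ) 1, δ' := by
    rw [setLIntegral_const]
    simp
  have hpoint : ∀ t : ℝ, pr p (S t) - δ' ≤ (2 : ℝ≥0∞) ^ k * pr q (S t) := by
    intro t
    rcases le_or_gt (pr p (S t)) δ' with hle | hlt
    · simp [tsub_eq_zero_of_le hle]
    · exact h (S t) hlt
  have hfin : (2 : ℝ≥0∞) ^ k ≠ ⊤ := by
    simp [ENNReal.rpow_eq_top_iff]
  calc pr (p.bind T) O - δ'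
      = (∫⁻ t in Set.Ioc (0:ℝ) 1, pr p (S t)) - ∫⁻ _ in Set.Ioc (0:ℝ) 1, δ' := by
        rw [hp, ← hδconst]
    _ ≤ ∫⁻ t in Set.Ioc (0:ℝ) 1, (pr p (S t) - δ') :=
        lintegral_sub_le _ _ measurable_const
    _ ≤ ∫⁻ t in Set.Ioc (0:ℝ) 1, (2 : ℝ≥0∞) ^ k * pr q (S t) :=
        lintegral_mono fun t => hpoint t
    _ = (2 : ℝ≥0∞) ^ k * ∫⁻ t in Set.Ioc (0:ℝ) 1, pr q (S t) :=
        lintegral_const_mul' _ _ hfin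
    _ = (2 : ℝ≥0∞) ^ k * pr (q.bind T) O := by rw [hq]

lemma joint_bind_eq {A B C : Type*} (μ : PMF A) (f : A → PMF B) (g : B → PMF C) :
    joint μ (fun a => (f a).bind g)
      = (joint μ f).bind (fun z => (g z.2).map fun c => (z.1, c)) := by
  simp [joint, PMF.bind_bind, PMF.bind_map, PMF.map_bind, Function.comp]
  rfl

lemma indepProd_bind_eq {A B C : Type*} (μ : PMF A) (f : A → PMF B) (g : B → PMF C) :
    indepProd μ (fun a => (f a).bind g)
      = (indepProd μ f).bind (fun z => (g z.2).map fun c => (z.1, c)) := by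
  simp [indepProd, pmfPair, PMF.bind_bind, PMF.bind_map, PMF.map_bind, Function.comp]
  rfl

/-- approximate max-information is preserved under post-processing.
For any post-processing algorithm `B : 𝒴 → PMF 𝒴'`,
`I_∞^β(S; B(A(S))) ≤ I_∞^β(S; A(S))`, stated as: every upper bound `k` on the
β-approximate max-information of `(S, A(S))` is also an upper bound for `(S, B(A(S)))`. -/
theorem approxMaxInfo_postprocessing
    {X Y Y' : Type*} [Fintype X] [Fintype Y] [Fintype Y'] {n : ℕ}
    (μ : PMF (Fin n → X)) (A : (Fin n → X) → PMF Y) (B : Y → PMF Y')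
    (β : ℝ) (hβ : 0 ≤ β) :
    ∀ k : ℝ, approxMaxInfoLe μ A β k →
      approxMaxInfoLe μ (fun S => (A S).bind B) β k := by
  intro k hk
  unfold approxMaxInfoLe at *
  rw [joint_bind_eq μ A B, indepProd_bind_eq μ A B]
  exact approxDivLe_bind _ _ _ _ _ hk
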